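/- Let G be a group and φ : G → ℝ a group homomorphism into the additive reals. Let A be an l × m matrix and B an m × p matrix over MonoidAlgebra ℤ G such that A * B = 0. Then L_φ(A) * L_φ(B) = 0. -/

import Mathlib

open scoped Classical

/-- For a nonzero `a` in the integral group ring, `deltaPhi φ a` is the minimum of `φ`
over the (finite, nonempty) support of `a`; junk value `0` for `a = 0`. -/
noncomputable def deltaPhi {G : Type*} [Group G] (φ : G → ℝ)
    (a : MonoidAlgebra ℤ G) : ℝ :=
  if h : a.coeff.support.Nonempty then a.coeff.support.inf' h φ else 0

/-- `deltaMat φ A` is the minimum of `deltaPhi φ` over the nonzero entries of the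
matrix `A`; junk value `0` for the zero matrix. -/
noncomputable def deltaMat {G : Type*} [Group G] (φ : G → ℝ)
    {l m : Type*} [Fintype l] [Fintype m]
    (A : Matrix l m (MonoidAlgebra ℤ G)) : ℝ :=
  if h : ((Finset.univ : Finset (l × m)).filter fun p => A p.1 p.2 ≠ 0).Nonempty then
    (((Finset.univ : Finset (l × m)).filter fun p => A p.1 p.2 ≠ 0).inf' h
      fun p => deltaPhi φ (A p.1 p.2))
  else 0

/-- The leading matrix `L_φ(A)`: the `(i,j)` entry is the restriction of `A i j` to the
group elements `g` with `φ g = deltaMat φ A`. -/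
noncomputable def leadMat {G : Type*} [Group G] (φ : G → ℝ)
    {l m : Type*} [Fintype l] [Fintype m]
    (A : Matrix l m (MonoidAlgebra ℤ G)) : Matrix l m (MonoidAlgebra ℤ G) :=
  Matrix.of fun i j => MonoidAlgebra.ofCoeff (Finsupp.filter (fun g => φ g = deltaMat φ A) (A i j).coeff)


private lemma filt_self {G : Type*} (P : G → Prop) (a : MonoidAlgebra ℤ G)
    (h : ∀ g ∈ a.coeff.support, P g) : Finsupp.filter P a.coeff = a.coeff := by
  ext g
  rw [Finsupp.filter_apply]
  by_cases hg : a.coeff g = 0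
  · simp [hg]
  · rw [if_pos (h g (Finsupp.mem_support_iff.2 hg))]

private lemma filt_zero {G : Type*} (P : G → Prop) (a : MonoidAlgebra ℤ G)
    (h : ∀ g ∈ a.coeff.support, ¬ P g) : Finsupp.filter P a.coeff = 0 := by
  ext g
  rw [Finsupp.filter_apply]
  by_cases hg : a.coeff g = 0
  · simp [hg]
  · rw [if_neg (h g (Finsupp.mem_support_iff.2 hg))]; rfl

private lemma mul_supp {G : Type*} [Group G] (x y : MonoidAlgebra ℤ G) {g : G}
    (hg : g ∈ (x * y).coeff.support) :
    ∃ g1 ∈ x.coeff.support, ∃ g2 ∈ y.coeff.support, g1 * g2 = g :=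
  Finset.mem_mul.1 (MonoidAlgebra.support_coeff_mul_subset x y hg)

private lemma filt_mul_zero {G : Type*} [Group G] (φ : G → ℝ) (d : ℝ)
    (x y : MonoidAlgebra ℤ G)
    (hxy : ∀ g1 ∈ x.coeff.support, ∀ g2 ∈ y.coeff.support, φ (g1 * g2) ≠ d) :
    Finsupp.filter (fun g => φ g = d) (x * y).coeff = 0 := by
  refine filt_zero _ _ (fun g hg => ?_)
  obtain ⟨g1, h1, g2, h2, rfl⟩ := mul_supp x y hg
  exact hxy g1 h1 g2 h2

noncomputable def ldp {G : Type*} [Group G] (φ : G → ℝ) (d : ℝ)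
    (a : MonoidAlgebra ℤ G) : MonoidAlgebra ℤ G :=
  MonoidAlgebra.ofCoeff (Finsupp.filter (fun g => φ g = d) a.coeff)

private lemma key {G : Type*} [Group G] (φ : G → ℝ)
    (hφ : ∀ g h : G, φ (g * h) = φ g + φ h) (dA dB : ℝ)
    (a b : MonoidAlgebra ℤ G)
    (ha : ∀ g ∈ a.coeff.support, dA ≤ φ g) (hb : ∀ g ∈ b.coeff.support, dB ≤ φ g) :
    MonoidAlgebra.ofCoeff (Finsupp.filter (fun g => φ g = dA + dB) (a * b).coeff)
      = ldp φ dA a * ldp φ dB b := by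
  set aL : MonoidAlgebra ℤ G := ldp φ dA a with haL
  set aH : MonoidAlgebra ℤ G := MonoidAlgebra.ofCoeff (Finsupp.filter (fun g => ¬ φ g = dA) a.coeff) with haH
  set bL : MonoidAlgebra ℤ G := ldp φ dB b with hbL
  set bH : MonoidAlgebra ℤ G := MonoidAlgebra.ofCoeff (Finsupp.filter (fun g => ¬ φ g = dB) b.coeff) with hbH
  have hadec : aL + aH = a := congrArg MonoidAlgebra.ofCoeff (Finsupp.filter_pos_add_filter_neg a.coeff _)
  have hbdec : bL + bH = b := congrArg MonoidAlgebra.ofCoeff (Finsupp.filter_pos_add_filter_neg b.coeff _)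
  have haLs : ∀ g ∈ aL.coeff.support, φ g = dA := by
    intro g hg; rw [haL, ldp, MonoidAlgebra.coeff_ofCoeff, Finsupp.support_filter] at hg
    exact (Finset.mem_filter.1 hg).2
  have hbLs : ∀ g ∈ bL.coeff.support, φ g = dB := by
    intro g hg; rw [hbL, ldp, MonoidAlgebra.coeff_ofCoeff, Finsupp.support_filter] at hg
    exact (Finset.mem_filter.1 hg).2
  have haHs : ∀ g ∈ aH.coeff.support, dA < φ g := by
    intro g hg; rw [haH, MonoidAlgebra.coeff_ofCoeff, Finsupp.support_filter] at hg
    obtain ⟨h1, h2⟩ := Finset.mem_filter.1 hg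
    exact lt_of_le_of_ne (ha g h1) (Ne.symm h2)
  have hbHs : ∀ g ∈ bH.coeff.support, dB < φ g := by
    intro g hg; rw [hbH, MonoidAlgebra.coeff_ofCoeff, Finsupp.support_filter] at hg
    obtain ⟨h1, h2⟩ := Finset.mem_filter.1 hg
    exact lt_of_le_of_ne (hb g h1) (Ne.symm h2)
  have e1 : Finsupp.filter (fun g => φ g = dA + dB) (aL * bL).coeff = (aL * bL).coeff := by
    refine filt_self _ _ (fun g hg => ?_)
    obtain ⟨g1, h1, g2, h2, rfl⟩ := mul_supp aL bL hg
    rw [hφ, haLs g1 h1, hbLs g2 h2]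
  have e2 : Finsupp.filter (fun g => φ g = dA + dB) (aL * bH).coeff = 0 := by
    refine filt_mul_zero _ _ _ _ (fun g1 h1 g2 h2 => ?_)
    rw [hφ, haLs g1 h1]
    have := hbHs g2 h2; intro hc; linarith
  have e3 : Finsupp.filter (fun g => φ g = dA + dB) (aH * bL).coeff = 0 := by
    refine filt_mul_zero _ _ _ _ (fun g1 h1 g2 h2 => ?_)
    rw [hφ, hbLs g2 h2]
    have := haHs g1 h1; intro hc; linarith
  have e4 : Finsupp.filter (fun g => φ g = dA + dB) (aH * bH).coeff = 0 := by
    refine filt_mul_zero _ _ _ _ (fun g1 h1 g2 h2 => ?_)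
    rw [hφ]
    have := haHs g1 h1; have := hbHs g2 h2; intro hc; linarith
  conv_lhs => rw [← hadec, ← hbdec]
  rw [add_mul, mul_add, mul_add, ← add_assoc, MonoidAlgebra.coeff_add, MonoidAlgebra.coeff_add, MonoidAlgebra.coeff_add, Finsupp.filter_add, Finsupp.filter_add,
    Finsupp.filter_add, e1, e2, e3, e4, add_zero, add_zero, add_zero, MonoidAlgebra.ofCoeff_coeff]

/-- If `A * B = 0` then the leading matrices satisfy `L_φ(A) * L_φ(B) = 0`. -/
theorem leadMat_mul_eq_zero {G : Type*} [Group G] (φ : G → ℝ)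
    (hφ : ∀ g h : G, φ (g * h) = φ g + φ h)
    {l m p : Type*} [Fintype l] [Fintype m] [Fintype p]
    (A : Matrix l m (MonoidAlgebra ℤ G)) (B : Matrix m p (MonoidAlgebra ℤ G))
    (h : A * B = 0) :
    leadMat φ A * leadMat φ B = 0 := by
  have hA : ∀ (i : l) (j : m), ∀ g ∈ (A i j).coeff.support, deltaMat φ A ≤ φ g := by
    intro i j g hg
    have hne : A i j ≠ 0 := by
      intro h0; rw [h0, MonoidAlgebra.coeff_zero, Finsupp.support_zero] at hg
      exact absurd hg (Finset.notMem_empty g)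
    have h1 : deltaMat φ A ≤ deltaPhi φ (A i j) := by
      rw [deltaMat, dif_pos ⟨(i, j), Finset.mem_filter.2 ⟨Finset.mem_univ _, hne⟩⟩]
      exact Finset.inf'_le _ (Finset.mem_filter.2 ⟨Finset.mem_univ (i, j), hne⟩)
    have h2 : deltaPhi φ (A i j) ≤ φ g := by
      rw [deltaPhi, dif_pos ⟨g, hg⟩]
      exact Finset.inf'_le _ hg
    linarith
  have hB : ∀ (j : m) (k : p), ∀ g ∈ (B j k).coeff.support, deltaMat φ B ≤ φ g := by
    intro j k g hg
    have hne : B j k ≠ 0 := by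
      intro h0; rw [h0, MonoidAlgebra.coeff_zero, Finsupp.support_zero] at hg
      exact absurd hg (Finset.notMem_empty g)
    have h1 : deltaMat φ B ≤ deltaPhi φ (B j k) := by
      rw [deltaMat, dif_pos ⟨(j, k), Finset.mem_filter.2 ⟨Finset.mem_univ _, hne⟩⟩]
      exact Finset.inf'_le _ (Finset.mem_filter.2 ⟨Finset.mem_univ (j, k), hne⟩)
    have h2 : deltaPhi φ (B j k) ≤ φ g := by
      rw [deltaPhi, dif_pos ⟨g, hg⟩]
      exact Finset.inf'_le _ hg
    linarith
  ext i k : 1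
  rw [Matrix.mul_apply, Matrix.zero_apply]
  have step : ∀ j : m, leadMat φ A i j * leadMat φ B j k
      = MonoidAlgebra.ofCoeff (Finsupp.filter (fun g => φ g = deltaMat φ A + deltaMat φ B) (A i j * B j k).coeff) :=
    fun j => (key φ hφ (deltaMat φ A) (deltaMat φ B) (A i j) (B j k) (hA i j) (hB j k)).symm
  rw [Finset.sum_congr rfl fun j _ => step j, ← MonoidAlgebra.ofCoeff_sum, ← Finsupp.filter_sum, ← MonoidAlgebra.coeff_sum]
  have hzero : ∑ j : m, A i j * B j k = 0 := by
    have := congrFun (congrFun h i) k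
    rwa [Matrix.mul_apply, Matrix.zero_apply] at this
  rw [hzero, MonoidAlgebra.coeff_zero, Finsupp.filter_zero, MonoidAlgebra.ofCoeff_zero]
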